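/- Let H : ℝ^n → ℝ^D satisfy ‖H(x) − H(y)‖ ≥ α‖x − y‖ for all x, y ∈ ℝ^n (with α > 0, so H is injective), and let w ∈ S^{D−1} be a unit vector such that ‖w − s(x,y)‖ ≥ ρ for all x ≠ y, where s(x,y) = (H(x) − H(y))/‖H(x) − H(y)‖. Define Q_w(z) = z − ⟨z, w⟩w. Then for all x, y ∈ ℝ^n: ‖Q_w(H(x)) − Q_w(H(y))‖ ≥ (1/√2)·ρ·α·‖x − y‖. -/

import Mathlib

lemma aux_proj_bound {E : Type*} [NormedAddCommGroup E] [InnerProductSpace ℝ E]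
    (u w : E) (ρ : ℝ) (hρ : 0 ≤ ρ) (hw : ‖w‖ = 1) (hu : u ≠ 0)
    (h1 : ρ ≤ ‖w - ‖u‖⁻¹ • u‖) (h2 : ρ ≤ ‖w - ‖u‖⁻¹ • (-u)‖) :
    1 / Real.sqrt 2 * ρ * ‖u‖ ≤ ‖u - (inner ℝ u w : ℝ) • w‖ := by
  set r : ℝ := ‖u‖ with hr
  have hrpos : 0 < r := norm_pos_iff.mpr hu
  set c : ℝ := inner ℝ u w with hc
  have hcw : (inner ℝ w u : ℝ) = c := real_inner_comm u w
  have e1 : ‖w - r⁻¹ • u‖ ^ 2 = 2 - 2 * (c / r) := by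
    rw [norm_sub_sq_real, real_inner_smul_right, norm_smul, hcw, hw]
    have : ‖r⁻¹‖ = r⁻¹ := abs_of_pos (by positivity)
    rw [this]; field_simp; ring
  have e2 : ‖w - r⁻¹ • (-u)‖ ^ 2 = 2 + 2 * (c / r) := by
    rw [norm_sub_sq_real, real_inner_smul_right, inner_neg_right, norm_smul, norm_neg, hcw, hw]
    have : ‖r⁻¹‖ = r⁻¹ := abs_of_pos (by positivity)
    rw [this]; field_simp; ring
  have h1' : ρ ^ 2 ≤ 2 - 2 * (c / r) := by
    rw [← e1]; exact pow_le_pow_left₀ hρ h1 2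
  have h2' : ρ ^ 2 ≤ 2 + 2 * (c / r) := by
    rw [← e2]; exact pow_le_pow_left₀ hρ h2 2
  have eQ : ‖u - c • w‖ ^ 2 = r ^ 2 - c ^ 2 := by
    rw [norm_sub_sq_real, real_inner_smul_right, norm_smul, hw, ← hc]
    simp [Real.norm_eq_abs, sq_abs]
    ring
  have hd1 : c / r ≤ 1 - ρ ^ 2 / 2 := by linarith
  have hd2 : -(c / r) ≤ 1 - ρ ^ 2 / 2 := by linarith
  have hcr1 : c ≤ (1 - ρ ^ 2 / 2) * r := by
    have := mul_le_mul_of_nonneg_right hd1 hrpos.le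
    rwa [div_mul_cancel₀ c hrpos.ne'] at this
  have hcr2 : -c ≤ (1 - ρ ^ 2 / 2) * r := by
    have := mul_le_mul_of_nonneg_right hd2 hrpos.le
    rwa [neg_mul, div_mul_cancel₀ c hrpos.ne'] at this
  have habs : |c| ≤ (1 - ρ ^ 2 / 2) * r := abs_le.mpr ⟨by linarith, hcr1⟩
  have hρ2 : ρ ^ 2 ≤ 2 := by linarith
  have hc2 : c ^ 2 ≤ ((1 - ρ ^ 2 / 2) * r) ^ 2 := by
    rw [← sq_abs c]; exact pow_le_pow_left₀ (abs_nonneg c) habs 2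
  have key : ρ ^ 2 / 2 * r ^ 2 ≤ r ^ 2 - c ^ 2 := by
    nlinarith [sq_nonneg ρ, mul_pos hrpos hrpos, sq_nonneg (ρ * r), sq_nonneg (ρ^2 * r)]
  have hQnn : 0 ≤ ‖u - c • w‖ := norm_nonneg _
  have hlhs : (1 / Real.sqrt 2 * ρ * r) ^ 2 ≤ ‖u - c • w‖ ^ 2 := by
    rw [eQ]
    have h2e : (1 / Real.sqrt 2 * ρ * r) ^ 2 = ρ ^ 2 / 2 * r ^ 2 := by
      rw [mul_pow, mul_pow, div_pow, one_pow, Real.sq_sqrt (by norm_num : (0:ℝ) ≤ 2)]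
      ring
    linarith [h2e.le, h2e.ge]
  exact le_of_pow_le_pow_left₀ (by norm_num) hQnn hlhs

theorem projected_map_inverse_lipschitz {n D : ℕ} (α ρ : ℝ) (hα : 0 < α)
    (H : EuclideanSpace ℝ (Fin n) → EuclideanSpace ℝ (Fin D))
    (hlow : ∀ x y, α * ‖x - y‖ ≤ ‖H x - H y‖)
    (w : EuclideanSpace ℝ (Fin D)) (hw : ‖w‖ = 1)
    (hfar : ∀ x y, x ≠ y → ρ ≤ ‖w - ‖H x - H y‖⁻¹ • (H x - H y)‖) :
    ∀ x y,
      (1 / Real.sqrt 2) * ρ * α * ‖x - y‖ ≤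
        ‖(H x - (inner ℝ (H x) w : ℝ) • w) - (H y - (inner ℝ (H y) w : ℝ) • w)‖ := by
  intro x y
  by_cases hxy : x = y
  · subst hxy; simp
  by_cases hρ : ρ ≤ 0
  · calc (1 / Real.sqrt 2) * ρ * α * ‖x - y‖
        = (1 / Real.sqrt 2 * α * ‖x - y‖) * ρ := by ring
      _ ≤ 0 := mul_nonpos_of_nonneg_of_nonpos (by positivity) hρ
      _ ≤ _ := norm_nonneg _
  push_neg at hρ
  set u := H x - H y with hu
  have hune : u ≠ 0 := by
    intro h
    have h1 := hlow x y
    rw [hu] at h; rw [h] at h1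
    simp at h1
    have : 0 < ‖x - y‖ := by rw [norm_pos_iff, sub_ne_zero]; exact hxy
    nlinarith
  have h1 := hfar x y hxy
  have h2 := hfar y x (Ne.symm hxy)
  have hneg : H y - H x = -u := by rw [hu]; abel
  rw [hneg, norm_neg] at h2
  have key := aux_proj_bound u w ρ hρ.le hw hune h1 h2
  have heq : (H x - (inner ℝ (H x) w : ℝ) • w) - (H y - (inner ℝ (H y) w : ℝ) • w)
      = u - (inner ℝ u w : ℝ) • w := by
    rw [hu, inner_sub_left, sub_smul]
    abel
  rw [heq]
  calc (1 / Real.sqrt 2) * ρ * α * ‖x - y‖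
      ≤ 1 / Real.sqrt 2 * ρ * ‖u‖ := by
        have hl := hlow x y
        have : 0 ≤ 1 / Real.sqrt 2 * ρ := by positivity
        rw [mul_assoc]
        exact mul_le_mul_of_nonneg_left hl this
    _ ≤ _ := key
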